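/- The probability that the random binary search tree built from a uniformly random permutation of [n] has shape t equals the product over all nodes v of t of 1/st(v), where st(v) denotes the subtree size of node v in t. -/

import Mathlib

open Filter Real

/-- Binary trees: empty (`leaf`) or a node with left and right subtrees. -/
inductive BinTree where
  | leaf : BinTree
  | node : BinTree → BinTree → BinTree
deriving DecidableEq, Repr

namespace BinTree

/-- Number of nodes. -/
def size : BinTree → ℕ
  | leaf => 0
  | node l r => l.size + r.size + 1

/-- Product of subtree sizes over all nodes: `∏_{v∈t} st(v)`. -/
def stProd : BinTree → ℕ
  | leaf => 1
  | node l r => (node l r).size * l.stProd * r.stProd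

/-- Subtree-size entropy: `H_st(t) = ∑_{v∈t} lg st(v)`. -/
noncomputable def stEntropy : BinTree → ℝ
  | leaf => 0
  | node l r => Real.logb 2 ((node l r).size : ℝ) + l.stEntropy + r.stEntropy

/-- Size of the left subtree of the root. -/
def leftSize : BinTree → ℕ
  | leaf => 0
  | node l _ => l.size

/-- Every node has at most one (nonempty) child. -/
def isPath : BinTree → Prop
  | leaf => True
  | node l r => (l = leaf ∨ r = leaf) ∧ l.isPath ∧ r.isPath

/-- At every node the sizes of the two subtrees differ by at most 1. -/
def isBalanced : BinTree → Prop
  | leaf => True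
  | node l r => ((l.size : ℤ) - (r.size : ℤ)).natAbs ≤ 1 ∧ l.isBalanced ∧ r.isBalanced

/-- Number of leaves (nodes with no children). -/
def leafCount : BinTree → ℕ
  | leaf => 0
  | node l r => (if l = leaf ∧ r = leaf then 1 else 0) + l.leafCount + r.leafCount

/-- Number of binary nodes (both children present). -/
def binCount : BinTree → ℕ
  | leaf => 0
  | node l r => (if l ≠ leaf ∧ r ≠ leaf then 1 else 0) + l.binCount + r.binCount

/-- Number of nodes with only a left child. -/
def leftOnlyCount : BinTree → ℕ
  | leaf => 0
  | node l r => (if l ≠ leaf ∧ r = leaf then 1 else 0) + l.leftOnlyCount + r.leftOnlyCount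

/-- Number of nodes with only a right child. -/
def rightOnlyCount : BinTree → ℕ
  | leaf => 0
  | node l r => (if l = leaf ∧ r ≠ leaf then 1 else 0) + l.rightOnlyCount + r.rightOnlyCount

end BinTree

/-- Cartesian tree construction with explicit fuel (fuel ≥ length suffices). -/
def cartesianAux : ℕ → List ℕ → BinTree
  | 0, _ => .leaf
  | _ + 1, [] => .leaf
  | fuel + 1, x :: xs =>
      let m := List.foldl min x xs
      let i := (x :: xs).idxOf m
      .node (cartesianAux fuel ((x :: xs).take i)) (cartesianAux fuel ((x :: xs).drop (i + 1)))

/-- The Cartesian tree of a list: root at the (first) minimum, left/right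
subtrees built recursively from the prefix/suffix. -/
def cartesian (l : List ℕ) : BinTree := cartesianAux l.length l

/-- The array `A[1..n]` (as a list) associated with a permutation of `Fin n`. -/
def permList {n : ℕ} (p : Equiv.Perm (Fin n)) : List ℕ := List.ofFn fun k => (p k : ℕ)

/-- All binary trees with exactly `n` nodes. -/
def treesOfSize : ℕ → Finset BinTree
  | 0 => {BinTree.leaf}
  | n + 1 =>
    (Finset.range (n + 1)).attach.biUnion fun i =>
      ((treesOfSize i.1) ×ˢ (treesOfSize (n - i.1))).image fun p => BinTree.node p.1 p.2
termination_by n => n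
decreasing_by
  · exact Nat.lt_succ_of_le (Nat.le_of_lt_succ (Finset.mem_range.mp i.2))
  · exact Nat.lt_succ_of_le (Nat.sub_le n i.1)

/-- Shannon entropy (base 2) of the random-BST shape distribution on `n` nodes,
which assigns probability `1/stProd t` to each tree `t` on `n` nodes. -/
noncomputable def shapeEntropy (n : ℕ) : ℝ :=
  - ∑ t ∈ treesOfSize n, (1 / (t.stProd : ℝ)) * Real.logb 2 (1 / (t.stProd : ℝ))

/-- Expectation of `f` under the random-BST shape distribution on `n` nodes. -/
noncomputable def expCount (f : BinTree → ℕ) (n : ℕ) : ℝ :=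
  ∑ t ∈ treesOfSize n, (1 / (t.stProd : ℝ)) * (f t : ℝ)

/-- The entropy recurrence: `H 0 = H 1 = 0`, `H n = lg n + (2/n) ∑_{i<n} H i`. -/
noncomputable def Hrec : ℕ → ℝ
  | 0 => 0
  | 1 => 0
  | n + 2 =>
      Real.logb 2 ((n + 2 : ℕ) : ℝ) +
        (2 / ((n + 2 : ℕ) : ℝ)) * ∑ i ∈ (Finset.range (n + 2)).attach, Hrec i.1
termination_by n => n
decreasing_by exact Finset.mem_range.mp i.2

/-- `rmq_A(i,j)` (1-based): the position of the (first) minimum of `A[i..j]`. -/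
def rmqFun (A : List ℕ) (i j : ℕ) : ℕ :=
  let s := (A.drop (i - 1)).take (j - i + 1)
  i + s.idxOf (List.foldl min (s.headD 0) s)

/-- The inorder rank of the LCA of the nodes with inorder ranks `i` and `j`. -/
def lcaInorder : BinTree → ℕ → ℕ → ℕ
  | .leaf, _, _ => 0
  | .node l r, i, j =>
      let m := l.size + 1
      if i < m ∧ j < m then lcaInorder l i j
      else if m < i ∧ m < j then m + lcaInorder r (i - m) (j - m)
      else m

/-- The subtree rooted at the node reached from the root by the given
left(`false`)/right(`true`) directions, if it exists. -/
def subAt : BinTree → List Bool → Option BinTree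
  | t, [] => some t
  | .leaf, _ :: _ => none
  | .node l _, false :: p => subAt l p
  | .node _ r, true :: p => subAt r p

/-- Subtree size of the node at a position (0 if there is no node there). -/
def stAt (t : BinTree) (pos : List Bool) : ℕ := ((subAt t pos).getD .leaf).size

/-- Left-subtree size of the node at a position. -/
def lsAt (t : BinTree) (pos : List Bool) : ℕ := ((subAt t pos).getD .leaf).leftSize

/-- `Pruned μ s`: `μ` is obtained from `s` by replacing some subtrees by `leaf`. -/
inductive Pruned : BinTree → BinTree → Prop
  | leaf (t) : Pruned .leaf t
  | node {l' r' l r} : Pruned l' l → Pruned r' r → Pruned (.node l' r') (.node l r)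

/-- `PrunedN k μ s`: `μ` is obtained from `s` by pruning exactly `k` (nonempty) subtrees. -/
inductive PrunedN : ℕ → BinTree → BinTree → Prop
  | refl (t) : PrunedN 0 t t
  | prune (l r) : PrunedN 1 .leaf (.node l r)
  | node {a b l' r' l r} : PrunedN a l' l → PrunedN b r' r → PrunedN (a + b) (.node l' r') (.node l r)

/-- `IsSubtree s t`: `s` is the subtree of `t` rooted at some node (or `t` itself). -/
inductive IsSubtree : BinTree → BinTree → Prop
  | refl (t) : IsSubtree t t
  | left {s l r} : IsSubtree s l → IsSubtree s (.node l r)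
  | right {s l r} : IsSubtree s r → IsSubtree s (.node l r)

/-- `∑_{v∈μ} lg st_s(v)`: sum over the nodes of `μ` of the log-subtree-sizes
taken in the host tree `s` (for `μ` pruned from `s`). -/
noncomputable def mixedEntropy : BinTree → BinTree → ℝ
  | .leaf, _ => 0
  | .node _ _, .leaf => 0
  | .node l' r', .node l r =>
      Real.logb 2 ((BinTree.node l r).size : ℝ) + mixedEntropy l' l + mixedEntropy r' r

/-- 1-based preorder index of the node at a position (0 if no node there). -/
def preorderIdx : BinTree → List Bool → ℕ
  | _, [] => 1
  | .leaf, _ :: _ => 0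
  | .node l _, false :: p => 1 + preorderIdx l p
  | .node l r, true :: p => 1 + l.size + preorderIdx r p

/-- 1-based inorder index of the node at a position. -/
def inorderIdx : BinTree → List Bool → ℕ
  | t, [] => t.leftSize + 1
  | .leaf, _ :: _ => 0
  | .node l _, false :: p => inorderIdx l p
  | .node l r, true :: p => l.size + 1 + inorderIdx r p

/-- Binary entropy function (base 2). -/
noncomputable def binH (x : ℝ) : ℝ := -x * Real.logb 2 x - (1 - x) * Real.logb 2 (1 - x)

section CartesianProof

/-- min over a nonempty list via foldl -/
lemma foldlMin_mem (x : ℕ) (xs : List ℕ) : List.foldl min x xs ∈ x :: xs := by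
  induction xs generalizing x with
  | nil => simp
  | cons y ys ih =>
    rw [List.foldl_cons]
    have h := ih (min x y)
    rcases min_choice x y with h' | h' <;> rw [h'] at h <;>
      rcases List.mem_cons.1 h with h | h <;> simp [h', h]

lemma foldlMin_le (x : ℕ) (xs : List ℕ) : ∀ a ∈ x :: xs, List.foldl min x xs ≤ a := by
  induction xs generalizing x with
  | nil => simp
  | cons y ys ih =>
    intro a ha
    rw [List.foldl_cons]
    have key := ih (min x y)
    rcases List.mem_cons.1 ha with rfl | ha
    · exact le_trans (key _ (List.mem_cons_self)) (min_le_left _ _)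
    rcases List.mem_cons.1 ha with rfl | ha
    · exact le_trans (key _ (List.mem_cons_self)) (min_le_right _ _)
    · exact key _ (List.mem_cons_of_mem _ ha)

lemma cartesianAux_eq : ∀ f1 f2 (l : List ℕ), l.length ≤ f1 → l.length ≤ f2 →
    cartesianAux f1 l = cartesianAux f2 l := by
  intro f1
  induction f1 with
  | zero =>
    intro f2 l h1 h2
    have : l = [] := List.length_eq_zero_iff.1 (Nat.le_zero.1 h1)
    subst this
    cases f2 <;> rfl
  | succ f ih =>
    intro f2 l h1 h2
    cases l with
    | nil => cases f2 <;> rfl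
    | cons x xs =>
      cases f2 with
      | zero => simp at h2
      | succ g =>
        simp only [cartesianAux]
        have hm : List.foldl min x xs ∈ x :: xs := foldlMin_mem x xs
        have hilt : (x :: xs).idxOf (List.foldl min x xs) < (x :: xs).length :=
          List.idxOf_lt_length_iff.2 hm
        simp only [List.length_cons] at hilt h1 h2
        refine congrArg₂ BinTree.node ?_ ?_ <;> apply ih <;>
          simp [List.length_take, List.length_drop, List.length_cons] <;> omega

lemma cartesian_eq_aux (f : ℕ) (l : List ℕ) (h : l.length ≤ f) :
    cartesianAux f l = cartesian l :=
  cartesianAux_eq f l.length l h le_rfl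

lemma cartesian_cons (x : ℕ) (xs : List ℕ) :
    cartesian (x :: xs) =
      BinTree.node (cartesian ((x :: xs).take ((x :: xs).idxOf (List.foldl min x xs))))
        (cartesian ((x :: xs).drop ((x :: xs).idxOf (List.foldl min x xs) + 1))) := by
  have hm : List.foldl min x xs ∈ x :: xs := foldlMin_mem x xs
  have hilt : (x :: xs).idxOf (List.foldl min x xs) < (x :: xs).length :=
    List.idxOf_lt_length_iff.2 hm
  simp only [List.length_cons] at hilt
  conv_lhs => rw [cartesian, List.length_cons]
  simp only [cartesianAux]
  refine congrArg₂ BinTree.node ?_ ?_ <;> apply cartesian_eq_aux <;>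
    simp [List.length_take, List.length_drop, List.length_cons] <;> omega

lemma size_cartesian : ∀ (l : List ℕ), (cartesian l).size = l.length := by
  have key : ∀ f (l : List ℕ), l.length ≤ f → (cartesian l).size = l.length := by
    intro f
    induction f with
    | zero =>
      intro l h
      have : l = [] := List.length_eq_zero_iff.1 (Nat.le_zero.1 h)
      subst this; rfl
    | succ f ih =>
      intro l h
      cases l with
      | nil => rfl
      | cons x xs =>
        have hm : List.foldl min x xs ∈ x :: xs := foldlMin_mem x xs
        have hilt : (x :: xs).idxOf (List.foldl min x xs) < (x :: xs).length :=
          List.idxOf_lt_length_iff.2 hm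
        simp only [List.length_cons] at hilt h
        rw [cartesian_cons, BinTree.size,
          ih _ (by simp [List.length_take, List.length_cons]; omega),
          ih _ (by simp [List.length_drop, List.length_cons]; omega)]
        simp [List.length_take, List.length_drop, List.length_cons]
        omega
  exact fun l => key l.length l le_rfl

lemma cartesian_append (u : List ℕ) (m : ℕ) (v : List ℕ)
    (hu : ∀ a ∈ u, m < a) (hv : ∀ a ∈ v, m < a) :
    cartesian (u ++ m :: v) = BinTree.node (cartesian u) (cartesian v) := by
  obtain ⟨x, xs, hx⟩ : ∃ x xs, u ++ m :: v = x :: xs := by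
    cases u with
    | nil => exact ⟨m, v, rfl⟩
    | cons y ys => exact ⟨y, ys ++ m :: v, rfl⟩
  have hmins : List.foldl min x xs = m := by
    have h1 : List.foldl min x xs ∈ u ++ m :: v := hx ▸ foldlMin_mem x xs
    have h2 : List.foldl min x xs ≤ m := by
      apply foldlMin_le
      rw [← hx]
      exact List.mem_append_right u (List.mem_cons_self)
    rcases List.mem_append.1 h1 with h | h
    · exact absurd (hu _ h) (not_lt.2 h2)
    rcases List.mem_cons.1 h with h | h
    · exact h
    · exact absurd (hv _ h) (not_lt.2 h2)
  have hmnu : m ∉ u := fun h => lt_irrefl m (hu m h)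
  have hidx : (x :: xs).idxOf m = u.length := by
    rw [← hx, List.idxOf_append_of_notMem hmnu]
    simp [List.idxOf_cons_self]
  have htake : (u ++ m :: v).take u.length = u := List.take_left
  have hdrop : (u ++ m :: v).drop (u.length + 1) = v := by
    have h1 : u ++ m :: v = (u ++ [m]) ++ v := by simp
    have h2 : (u ++ [m]).length = u.length + 1 := by simp
    rw [h1, List.drop_left' h2]
  rw [hx, cartesian_cons, hmins, hidx, ← hx, htake, hdrop]

end CartesianProof


section Counting

/-- All arrangements (orderings) of a finset of naturals. -/
noncomputable def arr (S : Finset ℕ) : Finset (List ℕ) := S.toList.permutations.toFinset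

lemma mem_arr {S : Finset ℕ} {a : List ℕ} : a ∈ arr S ↔ a.Nodup ∧ a.toFinset = S := by
  rw [arr, List.mem_toFinset, List.mem_permutations]
  constructor
  · intro h
    refine ⟨h.nodup_iff.2 S.nodup_toList, ?_⟩
    rw [List.toFinset_eq_of_perm _ _ h, Finset.toList_toFinset]
  · rintro ⟨h1, h2⟩
    exact List.perm_of_nodup_nodup_toFinset_eq h1 S.nodup_toList
      (by rw [h2, Finset.toList_toFinset])

/-- Number of arrangements of `S` whose Cartesian tree is `t`. -/
noncomputable def cnt (S : Finset ℕ) (t : BinTree) : ℕ :=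
  ((arr S).filter fun a => cartesian a = t).card

lemma cartesian_eq_leaf {a : List ℕ} : cartesian a = .leaf ↔ a = [] := by
  constructor
  · intro h
    have h2 := size_cartesian a
    rw [h] at h2
    exact List.length_eq_zero_iff.1 (by simpa [BinTree.size] using h2.symm)
  · rintro rfl; rfl

lemma cnt_leaf (S : Finset ℕ) : cnt S .leaf = if S = ∅ then 1 else 0 := by
  unfold cnt
  have h : (arr S).filter (fun a => cartesian a = .leaf)
      = if S = ∅ then {([] : List ℕ)} else ∅ := by
    ext a
    simp only [Finset.mem_filter, mem_arr, cartesian_eq_leaf]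
    split_ifs with h
    · subst h
      simp only [Finset.mem_singleton]
      constructor
      · rintro ⟨_, rfl⟩; rfl
      · rintro rfl; exact ⟨⟨List.nodup_nil, rfl⟩, rfl⟩
    · simp only [Finset.notMem_empty, iff_false, not_and]
      rintro ⟨_, h2⟩ rfl
      exact h (by simpa using h2.symm)
  rw [h]
  split_ifs <;> simp

lemma stProd_pos (t : BinTree) : 0 < t.stProd := by
  induction t with
  | leaf => exact Nat.one_pos
  | node l r ihl ihr =>
    have h : 0 < (BinTree.node l r).size := by simp [BinTree.size]
    exact Nat.mul_pos (Nat.mul_pos h ihl) ihr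

lemma decomp {S : Finset ℕ} (hS : S.Nonempty) {a : List ℕ} {l r : BinTree}
    (ha1 : a.Nodup) (ha2 : a.toFinset = S) (ha3 : cartesian a = .node l r) :
    a = a.take l.size ++ S.min' hS :: a.drop (l.size + 1) ∧
      cartesian (a.take l.size) = l ∧ cartesian (a.drop (l.size + 1)) = r := by
  obtain ⟨x, xs, rfl⟩ : ∃ x xs, a = x :: xs := by
    cases a with
    | nil =>
      simp only [List.toFinset_nil] at ha2
      exact absurd ha2.symm hS.ne_empty
    | cons x xs => exact ⟨x, xs, rfl⟩
  have hm : List.foldl min x xs ∈ x :: xs := foldlMin_mem x xs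
  have hminS : List.foldl min x xs = S.min' hS := by
    apply le_antisymm
    · exact foldlMin_le x xs _ (by rw [← List.mem_toFinset, ha2]; exact S.min'_mem hS)
    · exact S.min'_le _ (by rw [← ha2]; exact List.mem_toFinset.2 hm)
  have hidx : (x :: xs).idxOf (List.foldl min x xs) < (x :: xs).length :=
    List.idxOf_lt_length_iff.2 hm
  rw [cartesian_cons] at ha3
  rw [BinTree.node.injEq] at ha3
  obtain ⟨hl, hr⟩ := ha3
  have hlen : ((x :: xs).take ((x :: xs).idxOf (List.foldl min x xs))).length = l.size := by
    rw [← hl, size_cartesian]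
  have hi : (x :: xs).idxOf (List.foldl min x xs) = l.size := by
    rw [List.length_take] at hlen
    omega
  rw [hi] at hl hr
  have hisz : l.size < (x :: xs).length := hi ▸ hidx
  have hget : (x :: xs)[l.size]'hisz = S.min' hS := by
    have hg := List.getElem_idxOf (xs := x :: xs) (x := List.foldl min x xs) hidx
    simp only [hi] at hg
    rw [← hminS]
    exact hg
  refine ⟨?_, hl, hr⟩
  conv_lhs => rw [← List.take_append_drop l.size (x :: xs)]
  congr 1
  rw [List.drop_eq_getElem_cons hisz, hget]

lemma cnt_node (S : Finset ℕ) (hS : S.Nonempty) (l r : BinTree) :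
    cnt S (.node l r) =
      ∑ A ∈ (S.erase (S.min' hS)).powersetCard l.size,
        cnt A l * cnt ((S.erase (S.min' hS)) \ A) r := by
  classical
  set m := S.min' hS with hm
  set E := S.erase m with hE
  have hmS : m ∈ S := S.min'_mem hS
  have hmlt : ∀ b ∈ E, m < b := fun b hb =>
    lt_of_le_of_ne (S.min'_le b (Finset.mem_of_mem_erase hb))
      (Finset.ne_of_mem_erase hb).symm
  set F : Finset (List ℕ × List ℕ) := (E.powersetCard l.size).biUnion
    (fun A => ((arr A).filter fun a => cartesian a = l) ×ˢ
      ((arr (E \ A)).filter fun a => cartesian a = r)) with hF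
  have hcard : F.card = ∑ A ∈ E.powersetCard l.size, cnt A l * cnt (E \ A) r := by
    rw [hF, Finset.card_biUnion]
    · exact Finset.sum_congr rfl fun A _ => by rw [Finset.card_product]; rfl
    · intro A hA B hB hAB
      rw [Function.onFun, Finset.disjoint_left]
      rintro ⟨u, v⟩ h1 h2
      rw [Finset.mem_product] at h1 h2
      have e1 := (mem_arr.1 (Finset.mem_of_mem_filter _ h1.1)).2
      have e2 := (mem_arr.1 (Finset.mem_of_mem_filter _ h2.1)).2
      exact hAB (e1 ▸ e2)
  rw [← hcard]
  show ((arr S).filter fun a => cartesian a = BinTree.node l r).card = F.card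
  apply Finset.card_bij (fun a _ => (a.take l.size, a.drop (l.size + 1)))
  · intro a ha
    rw [Finset.mem_filter] at ha
    obtain ⟨harr, hc⟩ := ha
    obtain ⟨ha1, ha2⟩ := mem_arr.1 harr
    obtain ⟨heq, hl, hr⟩ := decomp hS ha1 ha2 hc
    set u := a.take l.size with hu
    set v := a.drop (l.size + 1) with hv
    have hnd : (u ++ m :: v).Nodup := heq ▸ ha1
    rw [List.nodup_append'] at hnd
    obtain ⟨hnu, hnmv, hdisj⟩ := hnd
    have hmv : m ∉ v := (List.nodup_cons.1 hnmv).1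
    have hnv : v.Nodup := (List.nodup_cons.1 hnmv).2
    have hmu : m ∉ u := fun h => hdisj h (List.mem_cons_self)
    have hTF : u.toFinset ∪ insert m v.toFinset = S := by
      rw [← ha2]
      conv_rhs => rw [heq]
      simp
      rfl
    refine Finset.mem_biUnion.2 ⟨u.toFinset, ?_, ?_⟩
    · rw [Finset.mem_powersetCard]
      constructor
      · intro z hz
        rw [List.mem_toFinset] at hz
        rw [hE, Finset.mem_erase]
        refine ⟨fun h => hmu (h ▸ hz), ?_⟩
        rw [← ha2]
        exact List.mem_toFinset.2 (List.take_subset _ _ hz)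
      · rw [List.toFinset_card_of_nodup hnu]
        have h3 := size_cartesian u
        rw [hl] at h3
        exact h3.symm
    · rw [Finset.mem_product]
      constructor
      · exact Finset.mem_filter.2 ⟨mem_arr.2 ⟨hnu, rfl⟩, hl⟩
      · refine Finset.mem_filter.2 ⟨mem_arr.2 ⟨hnv, ?_⟩, hr⟩
        ext z
        simp only [Finset.mem_sdiff, hE, Finset.mem_erase, List.mem_toFinset]
        constructor
        · intro hz
          refine ⟨⟨fun h => hmv (h ▸ hz), ?_⟩, ?_⟩
          · rw [← ha2]
            exact List.mem_toFinset.2 (List.drop_subset _ _ hz)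
          · exact fun hzu => hdisj hzu (List.mem_cons_of_mem _ hz)
        · rintro ⟨⟨hzm, hzS⟩, hzu⟩
          have hza : z ∈ a.toFinset := ha2 ▸ hzS
          rw [heq] at hza
          simp only [List.toFinset_append, List.toFinset_cons, Finset.mem_union,
            Finset.mem_insert, List.mem_toFinset] at hza
          rcases hza with h | h | h
          · exact absurd h hzu
          · exact absurd h hzm
          · exact h
  · intro a ha b hb hab
    rw [Finset.mem_filter] at ha hb
    obtain ⟨ha1, ha2⟩ := mem_arr.1 ha.1
    obtain ⟨hb1, hb2⟩ := mem_arr.1 hb.1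
    obtain ⟨hea, _, _⟩ := decomp hS ha1 ha2 ha.2
    obtain ⟨heb, _, _⟩ := decomp hS hb1 hb2 hb.2
    simp only [Prod.mk.injEq] at hab
    rw [hea, heb, hab.1, hab.2]
  · rintro ⟨u, v⟩ hp
    obtain ⟨A, hA, hup⟩ := Finset.mem_biUnion.1 hp
    rw [Finset.mem_product] at hup
    obtain ⟨hu, hcu⟩ := Finset.mem_filter.1 hup.1
    obtain ⟨hv, hcv⟩ := Finset.mem_filter.1 hup.2
    obtain ⟨hnu, hTu⟩ := mem_arr.1 hu
    obtain ⟨hnv, hTv⟩ := mem_arr.1 hv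
    rw [Finset.mem_powersetCard] at hA
    have hAE : A ⊆ E := hA.1
    have hulen : u.length = l.size := by
      have h3 := size_cartesian u
      rw [hcu] at h3
      exact h3.symm
    have hmemu : ∀ z ∈ u, m < z := by
      intro z hz
      apply hmlt
      apply hAE
      rw [← hTu]
      exact List.mem_toFinset.2 hz
    have hmemv : ∀ z ∈ v, m < z := by
      intro z hz
      apply hmlt
      have hz2 : z ∈ E \ A := by rw [← hTv]; exact List.mem_toFinset.2 hz
      exact (Finset.mem_sdiff.1 hz2).1
    refine ⟨u ++ m :: v, ?_, ?_⟩
    · rw [Finset.mem_filter]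
      constructor
      · apply mem_arr.2
        constructor
        · rw [List.nodup_append']
          refine ⟨hnu, List.nodup_cons.2 ⟨fun h => lt_irrefl m (hmemv m h), hnv⟩, ?_⟩
          intro z hzu hzmv
          rcases List.mem_cons.1 hzmv with rfl | hzv
          · exact lt_irrefl _ (hmemu _ hzu)
          · have h1 : z ∈ A := by rw [← hTu]; exact List.mem_toFinset.2 hzu
            have h2 : z ∈ E \ A := by rw [← hTv]; exact List.mem_toFinset.2 hzv
            exact (Finset.mem_sdiff.1 h2).2 h1
        · rw [List.toFinset_append, List.toFinset_cons, hTu, hTv,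
            Finset.union_insert, Finset.union_sdiff_of_subset hAE, hE,
            Finset.insert_erase hmS]
      · rw [cartesian_append u m v hmemu hmemv, hcu, hcv]
    · simp only [Prod.mk.injEq]
      constructor
      · rw [← hulen]
        exact List.take_left
      · have hd : (u ++ m :: v).drop (u.length + 1) = v := by
          have h1 : u ++ m :: v = (u ++ [m]) ++ v := by simp
          have h2 : (u ++ [m]).length = u.length + 1 := by simp
          rw [h1, List.drop_left' h2]
        rw [← hulen, hd]

lemma cnt_mul : ∀ (t : BinTree) (S : Finset ℕ), S.card = t.size →
    cnt S t * t.stProd = (t.size).factorial := by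
  intro t
  induction t with
  | leaf =>
    intro S hS
    have h : S = ∅ := Finset.card_eq_zero.1 (by simpa [BinTree.size] using hS)
    simp [cnt_leaf, h, BinTree.stProd, BinTree.size]
  | node l r ihl ihr =>
    intro S hS
    have hpos : 0 < S.card := by rw [hS]; simp [BinTree.size]
    have hS' : S.Nonempty := Finset.card_pos.1 hpos
    set m := S.min' hS' with hm
    set E := S.erase m with hEdef
    have hE : E.card = l.size + r.size := by
      rw [hEdef, Finset.card_erase_of_mem (S.min'_mem hS'), hS]
      simp [BinTree.size]
    rw [cnt_node S hS' l r]
    have key : ∀ A ∈ E.powersetCard l.size,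
        cnt A l * cnt (E \ A) r * (BinTree.node l r).stProd
          = (l.size + r.size + 1) * (l.size.factorial * r.size.factorial) := by
      intro A hA
      obtain ⟨hAE, hAcard⟩ := Finset.mem_powersetCard.1 hA
      have hBcard : (E \ A).card = r.size := by
        rw [Finset.card_sdiff_of_subset hAE, hE, hAcard]
        omega
      have h1 := ihl A hAcard
      have h2 := ihr (E \ A) hBcard
      have hsp : (BinTree.node l r).stProd = (l.size + r.size + 1) * l.stProd * r.stProd := by
        simp [BinTree.stProd, BinTree.size]
      rw [hsp]
      calc cnt A l * cnt (E \ A) r * ((l.size + r.size + 1) * l.stProd * r.stProd)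
          = (l.size + r.size + 1) * ((cnt A l * l.stProd) * (cnt (E \ A) r * r.stProd)) := by
            ring
        _ = (l.size + r.size + 1) * (l.size.factorial * r.size.factorial) := by rw [h1, h2]
    rw [Finset.sum_mul, Finset.sum_congr rfl key, Finset.sum_const,
      Finset.card_powersetCard, hE, smul_eq_mul]
    have hsz : (BinTree.node l r).size = l.size + r.size + 1 := by simp [BinTree.size]
    rw [hsz, Nat.factorial_succ]
    have hch := Nat.choose_mul_factorial_mul_factorial (Nat.le_add_right l.size r.size)
    rw [Nat.add_sub_cancel_left] at hch
    calc (l.size + r.size).choose l.size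
          * ((l.size + r.size + 1) * (l.size.factorial * r.size.factorial))
        = (l.size + r.size + 1)
          * ((l.size + r.size).choose l.size * l.size.factorial * r.size.factorial) := by ring
      _ = (l.size + r.size + 1) * (l.size + r.size).factorial := by rw [hch]

lemma card_perm_eq (n : ℕ) (t : BinTree) :
    (Finset.univ.filter fun p : Equiv.Perm (Fin n) => cartesian (permList p) = t).card
      = cnt (Finset.range n) t := by
  classical
  show _ = ((arr (Finset.range n)).filter fun a => cartesian a = t).card
  apply Finset.card_bij (fun p _ => permList p)
  · intro p hp
    rw [Finset.mem_filter] at hp ⊢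
    refine ⟨mem_arr.2 ⟨?_, ?_⟩, hp.2⟩
    · rw [permList]
      exact List.nodup_ofFn.2 fun k k' h => p.injective (Fin.val_injective h)
    · ext z
      simp only [permList, List.mem_toFinset, List.mem_ofFn, Set.mem_range,
        Finset.mem_range]
      constructor
      · rintro ⟨k, rfl⟩
        exact (p k).isLt
      · intro hz
        exact ⟨p.symm ⟨z, hz⟩, by simp⟩
  · intro p _ q _ h
    rw [permList, permList] at h
    have h2 := List.ofFn_inj.1 h
    exact Equiv.ext fun k => Fin.val_injective (congrFun h2 k)
  · intro a ha
    rw [Finset.mem_filter] at ha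
    obtain ⟨harr, hc⟩ := ha
    obtain ⟨h1, h2⟩ := mem_arr.1 harr
    have hlen : a.length = n := by
      rw [← List.toFinset_card_of_nodup h1, h2, Finset.card_range]
    have hlt : ∀ k : Fin n, a[(k : ℕ)]'(by rw [hlen]; exact k.isLt) < n := by
      intro k
      have hmem : a[(k : ℕ)]'(by rw [hlen]; exact k.isLt) ∈ a :=
        List.getElem_mem _
      rw [← List.mem_toFinset, h2, Finset.mem_range] at hmem
      exact hmem
    set f : Fin n → Fin n :=
      fun k => ⟨a[(k : ℕ)]'(by rw [hlen]; exact k.isLt), hlt k⟩ with hf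
    have hinj : Function.Injective f := by
      intro k k' hkk
      have hval : a[(k : ℕ)]'(by rw [hlen]; exact k.isLt)
          = a[(k' : ℕ)]'(by rw [hlen]; exact k'.isLt) := congrArg Fin.val hkk
      exact Fin.ext (h1.getElem_inj_iff.1 hval)
    set p : Equiv.Perm (Fin n) := Equiv.ofBijective f (Finite.injective_iff_bijective.1 hinj)
      with hpdef
    have hpa : permList p = a := by
      rw [permList]
      apply List.ext_getElem
      · simp [hlen]
      · intro i hi1 hi2
        simp only [List.getElem_ofFn]
        rfl
    exact ⟨p, Finset.mem_filter.2 ⟨Finset.mem_univ _, by rw [hpa]; exact hc⟩, hpa⟩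

end Counting

/-- The probability that the Cartesian tree (equivalently, the random BST) of a
uniformly random permutation of `[n]` has shape `t` equals `∏_{v∈t} 1/st(v)`. -/
theorem stmt0 (n : ℕ) (t : BinTree) (ht : t.size = n) :
    ((Finset.univ.filter fun p : Equiv.Perm (Fin n) =>
        cartesian (permList p) = t).card : ℝ) / (n.factorial : ℝ)
      = 1 / (t.stProd : ℝ) := by
  have h1 := cnt_mul t (Finset.range n) (by rw [Finset.card_range, ht])
  rw [ht] at h1
  rw [card_perm_eq n t]
  have hst : (0 : ℝ) < (t.stProd : ℝ) := by exact_mod_cast stProd_pos t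
  have hf : (0 : ℝ) < (n.factorial : ℝ) := by exact_mod_cast n.factorial_pos
  rw [div_eq_div_iff hf.ne' hst.ne', one_mul]
  exact_mod_cast h1
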